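/- Let 6/5 < γ < 2, A > 0, R̄ > 0, κ > 0, and let ρ̄ ∈ C¹((0, R̄)) be positive. For a positive C¹ density ρ on an interval (0, L) with pressure P = Aρ^γ, define the linearized operator (ℒ_ρ y)(r) = -(1/(ρ(r) r⁴)) · d/dr( γ r⁴ P(r) y'(r) ) + ((4-3γ)/(ρ(r) r)) · P'(r) · y(r). Define the rescaled density ρ_κ(r) = κ^{2/(γ-2)} ρ̄(r/κ) on (0, κR̄). Then for every y ∈ C_c^∞((0, κR̄)), writing y_κ(s) := y(κs), the following two identities hold: ∫₀^{κR̄} (ℒ_{ρ_κ} y)(r) · y(r) · ρ_κ(r) r⁴ dr = κ^{(5γ-6)/(γ-2)} ∫₀^{R̄} (ℒ_{ρ̄} y_κ)(s) · y_κ(s) · ρ̄(s) s⁴ ds, and ∫₀^{κR̄} y(r)² ρ_κ(r) r⁴ dr = κ^{(5γ-8)/(γ-2)} ∫₀^{R̄} y_κ(s)² ρ̄(s) s⁴ ds. Consequently the Rayleigh quotient of ℒ_{ρ_κ} at y equals κ^{2/(γ-2)} times the Rayleigh quotient of ℒ_{ρ̄} at y_κ. -/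

import Mathlib

open Real MeasureTheory Set Filter Topology

/-- The linearized oscillation operator `ℒ_ρ` associated with a density `ρ` and
pressure `P = Aρ^γ`:
`(ℒ_ρ y)(r) = -(1/(ρ r⁴)) (γ r⁴ P y')' + ((4-3γ)/(ρ r)) P' y`. -/
noncomputable def Lop (A γ : ℝ) (ρ : ℝ → ℝ) (y : ℝ → ℝ) : ℝ → ℝ := fun r =>
  -(1 / (ρ r * r^4)) * deriv (fun s => γ * s^4 * (A * ρ s ^ γ) * deriv y s) r
  + ((4 - 3*γ) / (ρ r * r)) * deriv (fun s => A * ρ s ^ γ) r * y r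

lemma pointwise_key (γ A Rb κ : ℝ) (ρb : ℝ → ℝ)
    (hγ2 : γ < 2) (hκ : 0 < κ)
    (hρreg : ContDiffOn ℝ 1 ρb (Ioo 0 Rb)) (hρpos : ∀ r ∈ Ioo 0 Rb, 0 < ρb r)
    (y : ℝ → ℝ) (hy : ContDiff ℝ (⊤:ℕ∞) y) (s : ℝ) (hs : s ∈ Ioo 0 Rb) :
    κ * (Lop A γ (fun u => κ ^ ((2:ℝ)/(γ-2)) * ρb (u / κ)) y (κ*s) * y (κ*s) *
          ((κ ^ ((2:ℝ)/(γ-2)) * ρb ((κ*s) / κ)) * (κ*s)^4))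
      = κ ^ ((5*γ-6)/(γ-2)) *
        (Lop A γ ρb (fun u => y (κ*u)) s * y (κ*s) * (ρb s * s^4)) := by
  have hκ0 : κ ≠ 0 := hκ.ne'
  have hγ2' : γ - 2 ≠ 0 := sub_ne_zero.mpr hγ2.ne
  set c : ℝ := κ ^ ((2:ℝ)/(γ-2)) with hc
  have hc0 : 0 < c := rpow_pos_of_pos hκ _
  set q : ℝ := c ^ γ with hq
  have hq0 : 0 < q := rpow_pos_of_pos hc0 _
  have hrs : κ * s / κ = s := by field_simp
  obtain ⟨hs1, hs2⟩ := hs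
  have hρs : 0 < ρb s := hρpos s ⟨hs1, hs2⟩
  -- differentiability of ρb at s
  have hρd : DifferentiableAt ℝ ρb s :=
    ((hρreg.differentiableOn one_ne_zero).differentiableAt (isOpen_Ioo.mem_nhds ⟨hs1, hs2⟩))
  -- derivative of y composed with κ•
  have hdy : Differentiable ℝ (deriv y) := ((contDiff_infty_iff_deriv.mp hy).2).differentiable (by simp)
  have hy' : Differentiable ℝ y := hy.differentiable (by simp)
  have hyk_deriv : ∀ u : ℝ, deriv (fun t => y (κ*t)) u = κ * deriv y (κ*u) := by
    intro u
    have h1 : HasDerivAt (fun t : ℝ => κ * t) κ u := by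
      simpa using (hasDerivAt_id u).const_mul κ
    have h2 : HasDerivAt (fun t => y (κ*t)) (deriv y (κ*u) * κ) u :=
      ((hy' (κ*u)).hasDerivAt).comp u h1
    rw [h2.deriv, mul_comm]
  -- the open neighborhood where κ-scaled points are in (0, Rb)
  have hUopen : IsOpen {u : ℝ | u / κ ∈ Ioo 0 Rb} :=
    isOpen_Ioo.preimage (continuous_id.div_const κ)
  have hUmem : (κ*s) ∈ {u : ℝ | u / κ ∈ Ioo 0 Rb} := by
    simp only [mem_setOf_eq, hrs]; exact ⟨hs1, hs2⟩
  have hU : {u : ℝ | u / κ ∈ Ioo 0 Rb} ∈ 𝓝 (κ*s) := hUopen.mem_nhds hUmem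
  -- inner derivative: u ↦ u/κ
  have hdivκ : HasDerivAt (fun u : ℝ => u / κ) (1/κ) (κ*s) := by
    simpa using (hasDerivAt_id (κ*s)).div_const κ
  -- === pressure-derivative term ===
  have hhd : DifferentiableAt ℝ (fun t => A * ρb t ^ γ) s :=
    (hρd.rpow_const (Or.inl hρs.ne')).const_mul A
  have hH : deriv (fun u => A * (c * ρb (u/κ)) ^ γ) (κ*s)
      = q * deriv (fun t => A * ρb t ^ γ) s * (1/κ) := by
    have hEq : (fun u => A * (c * ρb (u/κ)) ^ γ)
        =ᶠ[𝓝 (κ*s)] (fun u => q * (A * ρb (u/κ) ^ γ)) := by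
      filter_upwards [hU] with u hu
      rw [Real.mul_rpow hc0.le (hρpos _ hu).le]
      ring
    rw [hEq.deriv_eq]
    have hcomp : HasDerivAt (fun u => A * ρb (u/κ) ^ γ)
        (deriv (fun t => A * ρb t ^ γ) s * (1/κ)) (κ*s) := by
      have h0 : HasDerivAt (fun t => A * ρb t ^ γ) (deriv (fun t => A * ρb t ^ γ) s) (κ*s/κ) :=
        by rw [hrs]; exact hhd.hasDerivAt
      simpa [Function.comp_def] using HasDerivAt.comp (κ*s) h0 hdivκ
    rw [(hcomp.const_mul q).deriv]; ring
  -- === kinetic-derivative term ===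
  set G : ℝ → ℝ := fun t => γ * t^4 * (A * ρb t ^ γ) * deriv (fun u => y (κ*u)) t with hG
  have hGfun : G = fun t => γ * t^4 * (A * ρb t ^ γ) * (κ * deriv y (κ*t)) := by
    funext t; rw [hG]; simp only [hyk_deriv t]
  have hGd : DifferentiableAt ℝ G s := by
    rw [hGfun]
    have d1 : DifferentiableAt ℝ (fun t : ℝ => γ * t^4) s :=
      (differentiableAt_pow 4).const_mul γ
    have d2 : DifferentiableAt ℝ (fun t => A * ρb t ^ γ) s := hhd
    have d3 : DifferentiableAt ℝ (fun t : ℝ => κ * deriv y (κ*t)) s := by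
      have : DifferentiableAt ℝ (fun t : ℝ => deriv y (κ*t)) s :=
        (hdy (κ*s)).comp s ((differentiableAt_id.const_mul κ))
      exact this.const_mul κ
    exact (d1.mul d2).mul d3
  have hF : deriv (fun u => γ * u^4 * (A * (c * ρb (u/κ)) ^ γ) * deriv y u) (κ*s)
      = κ^3 * q * (deriv G s * (1/κ)) := by
    have hEq : (fun u => γ * u^4 * (A * (c * ρb (u/κ)) ^ γ) * deriv y u)
        =ᶠ[𝓝 (κ*s)] (fun u => (κ^3 * q) * G (u/κ)) := by
      filter_upwards [hU] with u hu
      rw [hG]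
      simp only [hyk_deriv (u/κ)]
      rw [Real.mul_rpow hc0.le (hρpos _ hu).le]
      have : κ * (u/κ) = u := by field_simp
      rw [this]
      field_simp
      ring
    rw [hEq.deriv_eq]
    have hcomp : HasDerivAt (fun u => G (u/κ)) (deriv G s * (1/κ)) (κ*s) := by
      have h0 : HasDerivAt G (deriv G s) (κ*s/κ) := by rw [hrs]; exact hGd.hasDerivAt
      simpa [Function.comp_def] using HasDerivAt.comp (κ*s) h0 hdivκ
    rw [(hcomp.const_mul (κ^3 * q)).deriv]
  -- === exponent arithmetic ===
  have hexp : κ ^ ((5*γ-6)/(γ-2)) = κ^3 * q := by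
    have h1 : (5*γ-6)/(γ-2) = 3 + (2/(γ-2))*γ := by field_simp; ring
    rw [h1, Real.rpow_add hκ, Real.rpow_mul hκ.le, hq, hc]
    rw [show (3:ℝ) = ((3:ℕ):ℝ) by norm_num, Real.rpow_natCast]
  -- === assemble ===
  simp only [Lop, hrs]
  rw [hF, hH, hexp, ← hG]
  have hne1 : (c * ρb s) * (κ*s)^4 ≠ 0 := by positivity
  have hne2 : (c * ρb s) * (κ*s) ≠ 0 := by
    apply mul_ne_zero (by positivity) (by positivity)
  field_simp

/-- Scaling identities behind the Ritter–Eddington period–density law.  For the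
rescaled equilibrium `ρ_κ(r) = κ^{2/(γ-2)} ρ̄(r/κ)` and any test function `y`
supported in `(0, κR̄)`, with `y_κ(s) = y(κs)`:
the quadratic form of `ℒ_{ρ_κ}` scales by `κ^{(5γ-6)/(γ-2)}`, the squared norm by
`κ^{(5γ-8)/(γ-2)}`, and hence the Rayleigh quotient by `κ^{2/(γ-2)}`. -/
theorem rayleigh_scaling (γ A Rb κ : ℝ) (ρb : ℝ → ℝ)
    (hγ1 : 6/5 < γ) (hγ2 : γ < 2) (hA : 0 < A) (hR : 0 < Rb) (hκ : 0 < κ)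
    (hρreg : ContDiffOn ℝ 1 ρb (Ioo 0 Rb)) (hρpos : ∀ r ∈ Ioo 0 Rb, 0 < ρb r)
    (y : ℝ → ℝ) (hy : ContDiff ℝ (⊤:ℕ∞) y) (hsupp : tsupport y ⊆ Ioo 0 (κ * Rb)) :
    (∫ r in (0:ℝ)..(κ*Rb),
        Lop A γ (fun u => κ ^ ((2:ℝ)/(γ-2)) * ρb (u / κ)) y r * y r *
          ((κ ^ ((2:ℝ)/(γ-2)) * ρb (r / κ)) * r^4))
      = κ ^ ((5*γ-6)/(γ-2)) *
        ∫ s in (0:ℝ)..Rb, Lop A γ ρb (fun u => y (κ*u)) s * y (κ*s) * (ρb s * s^4)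
    ∧ (∫ r in (0:ℝ)..(κ*Rb), (y r)^2 * ((κ ^ ((2:ℝ)/(γ-2)) * ρb (r / κ)) * r^4))
      = κ ^ ((5*γ-8)/(γ-2)) * ∫ s in (0:ℝ)..Rb, (y (κ*s))^2 * (ρb s * s^4)
    ∧ (∫ r in (0:ℝ)..(κ*Rb),
        Lop A γ (fun u => κ ^ ((2:ℝ)/(γ-2)) * ρb (u / κ)) y r * y r *
          ((κ ^ ((2:ℝ)/(γ-2)) * ρb (r / κ)) * r^4)) /
       (∫ r in (0:ℝ)..(κ*Rb), (y r)^2 * ((κ ^ ((2:ℝ)/(γ-2)) * ρb (r / κ)) * r^4))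
      = κ ^ ((2:ℝ)/(γ-2)) *
        ((∫ s in (0:ℝ)..Rb, Lop A γ ρb (fun u => y (κ*u)) s * y (κ*s) * (ρb s * s^4)) /
         (∫ s in (0:ℝ)..Rb, (y (κ*s))^2 * (ρb s * s^4))) := by
  have hκ0 : κ ≠ 0 := hκ.ne'
  have hγ2' : γ - 2 ≠ 0 := sub_ne_zero.mpr hγ2.ne
  have hΙ : Set.uIoc (0:ℝ) Rb = Ioc 0 Rb := uIoc_of_le hR.le
  have haeRb : ∀ᵐ x : ℝ ∂(volume : Measure ℝ), x ≠ Rb := by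
    have hset : ({Rb} : Set ℝ) = {x : ℝ | ¬ x ≠ Rb} := by ext x; simp
    rw [ae_iff, ← hset]
    exact measure_singleton Rb
  -- first identity
  have I1 : (∫ r in (0:ℝ)..(κ*Rb),
        Lop A γ (fun u => κ ^ ((2:ℝ)/(γ-2)) * ρb (u / κ)) y r * y r *
          ((κ ^ ((2:ℝ)/(γ-2)) * ρb (r / κ)) * r^4))
      = κ ^ ((5*γ-6)/(γ-2)) *
        ∫ s in (0:ℝ)..Rb, Lop A γ ρb (fun u => y (κ*u)) s * y (κ*s) * (ρb s * s^4) := by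
    have hcv := intervalIntegral.smul_integral_comp_mul_left
        (a := 0) (b := Rb)
        (fun r => Lop A γ (fun u => κ ^ ((2:ℝ)/(γ-2)) * ρb (u / κ)) y r * y r *
          ((κ ^ ((2:ℝ)/(γ-2)) * ρb (r / κ)) * r^4)) κ
    rw [mul_zero] at hcv
    rw [← hcv]
    have hcong : (∫ s in (0:ℝ)..Rb,
          Lop A γ (fun u => κ ^ ((2:ℝ)/(γ-2)) * ρb (u / κ)) y (κ*s) * y (κ*s) *
            ((κ ^ ((2:ℝ)/(γ-2)) * ρb ((κ*s) / κ)) * (κ*s)^4))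
        = ∫ s in (0:ℝ)..Rb, (κ ^ ((5*γ-6)/(γ-2)) / κ) *
            (Lop A γ ρb (fun u => y (κ*u)) s * y (κ*s) * (ρb s * s^4)) := by
      apply intervalIntegral.integral_congr_ae
      filter_upwards [haeRb] with x hx hmem
      rw [hΙ] at hmem
      have hxI : x ∈ Ioo 0 Rb := ⟨hmem.1, lt_of_le_of_ne hmem.2 hx⟩
      have hkey := pointwise_key γ A Rb κ ρb hγ2 hκ hρreg hρpos y hy x hxI
      rw [show κ*x/κ = x from by field_simp] at hkey ⊢
      field_simp
      rw [show γ * 5 - 6 = 5 * γ - 6 by ring]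
      linear_combination hkey
    rw [hcong, intervalIntegral.integral_const_mul, smul_eq_mul, ← mul_assoc,
      mul_div_cancel₀ _ hκ0]
  -- second identity
  have I2 : (∫ r in (0:ℝ)..(κ*Rb), (y r)^2 * ((κ ^ ((2:ℝ)/(γ-2)) * ρb (r / κ)) * r^4))
      = κ ^ ((5*γ-8)/(γ-2)) * ∫ s in (0:ℝ)..Rb, (y (κ*s))^2 * (ρb s * s^4) := by
    have hcv := intervalIntegral.smul_integral_comp_mul_left
        (a := 0) (b := Rb)
        (fun r => (y r)^2 * ((κ ^ ((2:ℝ)/(γ-2)) * ρb (r / κ)) * r^4)) κ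
    rw [mul_zero] at hcv
    rw [← hcv]
    have hcong : (∫ s in (0:ℝ)..Rb,
          (y (κ*s))^2 * ((κ ^ ((2:ℝ)/(γ-2)) * ρb ((κ*s) / κ)) * (κ*s)^4))
        = ∫ s in (0:ℝ)..Rb, (κ ^ ((2:ℝ)/(γ-2)) * κ^4) *
            ((y (κ*s))^2 * (ρb s * s^4)) := by
      apply intervalIntegral.integral_congr
      intro x _
      simp only [mul_div_cancel_left₀ _ hκ0]
      ring
    rw [hcong, intervalIntegral.integral_const_mul, smul_eq_mul, ← mul_assoc]
    congr 1
    have h1 : (5*γ-8)/(γ-2) = 5 + 2/(γ-2) := by field_simp; ring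
    rw [h1, Real.rpow_add hκ, show (5:ℝ) = ((5:ℕ):ℝ) by norm_num, Real.rpow_natCast]
    ring
  refine ⟨I1, I2, ?_⟩
  rw [I1, I2, mul_div_mul_comm, ← Real.rpow_sub hκ]
  congr 2
  field_simp
  ring
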